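/- The functions I₁ = 1/x + (f'² - g'²)/(2x(f'² + g'²)²) and I₂ = f' g'/(x (f'² + g'²)²) are first integrals of the system x f'' = -f'³ + 3 f' g'² - f'/2, x g'' = -3 f'² g' + g'³ - g'/2 on any interval where x ≠ 0 and f'² + g'² ≠ 0. -/

import Mathlib

/-- First integrals of the system `x f'' = -f'³ + 3f'g'² - f'/2`,
`x g'' = -3f'²g' + g'³ - g'/2` on an interval avoiding `x = 0`. -/
theorem first_integrals_case_N361
    (I : Set ℝ) (hI : IsOpen I) (h0 : (0:ℝ) ∉ I)
    (f g f' g' f'' g'' : ℝ → ℝ)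
    (hf : ∀ x, HasDerivAt f (f' x) x) (hf' : ∀ x, HasDerivAt f' (f'' x) x)
    (hg : ∀ x, HasDerivAt g (g' x) x) (hg' : ∀ x, HasDerivAt g' (g'' x) x)
    (hne : ∀ x ∈ I, f' x ^ 2 + g' x ^ 2 ≠ 0)
    (ode1 : ∀ x ∈ I, x * f'' x = -f' x ^ 3 + 3 * f' x * g' x ^ 2 - f' x / 2)
    (ode2 : ∀ x ∈ I, x * g'' x = -3 * f' x ^ 2 * g' x + g' x ^ 3 - g' x / 2) :
    (∀ x ∈ I, deriv (fun t => 1 / t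
        + (f' t ^ 2 - g' t ^ 2) / (2 * t * (f' t ^ 2 + g' t ^ 2) ^ 2)) x = 0) ∧
    (∀ x ∈ I, deriv (fun t => f' t * g' t / (t * (f' t ^ 2 + g' t ^ 2) ^ 2)) x = 0) := by
  constructor <;> intro x hx
  all_goals {
    have hx0 : x ≠ 0 := fun h => h0 (h ▸ hx)
    have hs : f' x ^ 2 + g' x ^ 2 ≠ 0 := hne x hx
    have hA : f'' x = (-f' x ^ 3 + 3 * f' x * g' x ^ 2 - f' x / 2) / x := by
      field_simp
      linarith [ode1 x hx]
    have hB : g'' x = (-3 * f' x ^ 2 * g' x + g' x ^ 3 - g' x / 2) / x := by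
      field_simp
      linarith [ode2 x hx]
    have hsum : HasDerivAt (fun t => f' t ^ 2 + g' t ^ 2)
        (2 * f' x ^ 1 * f'' x + 2 * g' x ^ 1 * g'' x) x :=
      (((hf' x).pow 2).add ((hg' x).pow 2))
    first
    | · -- first integral I₁
        have hnum : HasDerivAt (fun t => f' t ^ 2 - g' t ^ 2)
            (2 * f' x ^ 1 * f'' x - 2 * g' x ^ 1 * g'' x) x :=
          ((hf' x).pow 2).sub ((hg' x).pow 2)
        have hden : HasDerivAt (fun t => 2 * t * (f' t ^ 2 + g' t ^ 2) ^ 2)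
            ((2 * 1) * (f' x ^ 2 + g' x ^ 2) ^ 2
              + 2 * x * (2 * (f' x ^ 2 + g' x ^ 2) ^ 1 *
                (2 * f' x ^ 1 * f'' x + 2 * g' x ^ 1 * g'' x))) x :=
          ((hasDerivAt_id x).const_mul 2).mul (hsum.pow 2)
        have hden0 : 2 * x * (f' x ^ 2 + g' x ^ 2) ^ 2 ≠ 0 := by positivity
        have hinv : HasDerivAt (fun t : ℝ => 1 / t)
            ((0 * x - 1 * 1) / x ^ 2) x :=
          (hasDerivAt_const x (1:ℝ)).div (hasDerivAt_id x) hx0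
        have h : HasDerivAt (fun t => 1 / t
            + (f' t ^ 2 - g' t ^ 2) / (2 * t * (f' t ^ 2 + g' t ^ 2) ^ 2)) _ x :=
          (hinv.add (hnum.div hden hden0))
        rw [h.deriv, hA, hB]
        field_simp
        ring
    | · -- second integral I₂
        have hnum : HasDerivAt (fun t => f' t * g' t)
            (f'' x * g' x + f' x * g'' x) x := (hf' x).mul (hg' x)
        have hden : HasDerivAt (fun t => t * (f' t ^ 2 + g' t ^ 2) ^ 2)
            (1 * (f' x ^ 2 + g' x ^ 2) ^ 2
              + x * (2 * (f' x ^ 2 + g' x ^ 2) ^ 1 *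
                (2 * f' x ^ 1 * f'' x + 2 * g' x ^ 1 * g'' x))) x :=
          (hasDerivAt_id x).mul (hsum.pow 2)
        have hden0 : x * (f' x ^ 2 + g' x ^ 2) ^ 2 ≠ 0 := by positivity
        have h : HasDerivAt (fun t => f' t * g' t / (t * (f' t ^ 2 + g' t ^ 2) ^ 2)) _ x :=
          hnum.div hden hden0
        rw [h.deriv, hA, hB]
        field_simp
        ring
  }
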